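/- Let A be a ring with enough idempotents and F a unital left A-module of type FP₂. Then for any family {N_α}_{α∈S} of unital right A-modules there is an isomorphism Tor₁^A(∏^u_{α∈S} N_α, F) ≅ ∏_{α∈S} Tor₁^A(N_α, F), where ∏^u denotes the product in the category of unital right A-modules. -/

import Mathlib

open MulOpposite

universe u v w w' w₂ w₃

namespace EIMod

/-- A premodule over a nonunital ring `A`: an additive group with an associative,
biadditive scalar multiplication. -/
class PreMod (A : Type u) (M : Type w) [NonUnitalRing A] [AddCommGroup M] extends SMul A M where
  smul_add' : ∀ (a : A) (m n : M), a • (m + n) = a • m + a • n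
  add_smul' : ∀ (a b : A) (m : M), (a + b) • m = a • m + b • m
  mul_smul' : ∀ (a b : A) (m : M), (a * b) • m = a • (b • m)

namespace PreMod

variable {A : Type u} [NonUnitalRing A]

section Lemmas

variable {M : Type w} [AddCommGroup M] [PreMod A M]

lemma psmul_zero (a : A) : a • (0 : M) = 0 := by
  have h := smul_add' a (0 : M) 0
  rw [add_zero] at h
  exact (left_eq_add.mp h)

lemma psmul_neg (a : A) (m : M) : a • (-m) = -(a • m) := by
  have h := smul_add' a m (-m)
  rw [add_neg_cancel, psmul_zero] at h
  exact (eq_neg_of_add_eq_zero_right h.symm)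

lemma pzero_smul (m : M) : (0 : A) • m = 0 := by
  have h := add_smul' (0 : A) 0 m
  rw [add_zero] at h
  exact (left_eq_add.mp h)

lemma pneg_smul (a : A) (m : M) : (-a) • m = -(a • m) := by
  have h := add_smul' a (-a) m
  rw [add_neg_cancel, pzero_smul] at h
  exact (eq_neg_of_add_eq_zero_right h.symm)

/-- Scalar multiplication by a fixed `a : A` as an additive map. -/
def smulHom (M : Type w) [AddCommGroup M] [PreMod A M] (a : A) : M →+ M :=
  AddMonoidHom.mk' (fun m => a • m) (smul_add' a)

@[simp] lemma smulHom_apply (a : A) (m : M) : smulHom M a m = a • m := rfl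

end Lemmas

instance : PreMod A A where
  smul := (· * ·)
  smul_add' := mul_add
  add_smul' := add_mul
  mul_smul' := mul_assoc

lemma smul_def (a b : A) : a • b = a * b := rfl

instance : PreMod Aᵐᵒᵖ A where
  smul a x := x * a.unop
  smul_add' a m n := add_mul m n a.unop
  add_smul' a b m := by show m * (a + b).unop = m * a.unop + m * b.unop; rw [unop_add, mul_add]
  mul_smul' a b m := by
    show m * (a * b).unop = (m * b.unop) * a.unop
    rw [unop_mul, mul_assoc]

lemma op_smul_def (a : Aᵐᵒᵖ) (x : A) : a • x = x * a.unop := rfl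

instance instPi {ι : Type v} (β : ι → Type w) [∀ i, AddCommGroup (β i)]
    [∀ i, PreMod A (β i)] : PreMod A (∀ i, β i) where
  smul a f i := a • f i
  smul_add' a f g := funext fun i => smul_add' a (f i) (g i)
  add_smul' a b f := funext fun i => add_smul' a b (f i)
  mul_smul' a b f := funext fun i => mul_smul' a b (f i)

lemma pi_smul_apply {ι : Type v} {β : ι → Type w} [∀ i, AddCommGroup (β i)]
    [∀ i, PreMod A (β i)] (a : A) (f : ∀ i, β i) (i : ι) : (a • f) i = a • f i := rfl

noncomputable instance instFinsupp {σ : Type v} : PreMod A (σ →₀ A) where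
  smul a f := Finsupp.mapRange (a * ·) (mul_zero a) f
  smul_add' a f g := by
    ext s
    simp [Finsupp.mapRange_apply, mul_add]
  add_smul' a b f := by
    ext s
    simp [Finsupp.mapRange_apply, add_mul]
  mul_smul' a b f := by
    ext s
    simp [Finsupp.mapRange_apply, mul_assoc]

lemma finsupp_smul_single {σ : Type v} (a : A) (s : σ) (b : A) :
    a • (Finsupp.single s b) = Finsupp.single s (a * b) := by
  show Finsupp.mapRange (a * ·) (mul_zero a) (Finsupp.single s b) = _
  rw [Finsupp.mapRange_single]

end PreMod

open PreMod

variable (A : Type u) [NonUnitalRing A]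

/-- The additive subgroup of `A`-linear additive maps between two premodules. -/
def LHom (M : Type w) (N : Type w') [AddCommGroup M] [AddCommGroup N]
    [PreMod A M] [PreMod A N] : AddSubgroup (M →+ N) where
  carrier := {f | ∀ (a : A) (m : M), f (a • m) = a • f m}
  add_mem' := by
    intro f g hf hg a m
    simp only [AddMonoidHom.add_apply, hf a m, hg a m, PreMod.smul_add']
  zero_mem' := by
    intro a m
    simp [PreMod.psmul_zero]
  neg_mem' := by
    intro f hf a m
    simp [hf a m, PreMod.psmul_neg]

lemma mem_LHom {M : Type w} {N : Type w'} [AddCommGroup M] [AddCommGroup N]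
    [PreMod A M] [PreMod A N] (f : M →+ N) :
    f ∈ LHom A M N ↔ ∀ (a : A) (m : M), f (a • m) = a • f m := Iff.rfl

/-- A complete family of orthogonal idempotents for a nonunital ring:
`A` is a ring with enough idempotents. -/
class EnoughIdems {I : Type v} (e : I → A) : Prop where
  idem : ∀ i, e i * e i = e i
  orth : ∀ i j, i ≠ j → e i * e j = 0
  memLeft : ∀ a : A, a ∈ AddSubgroup.closure {x : A | ∃ i b, x = e i * b}
  memRight : ∀ a : A, a ∈ AddSubgroup.closure {x : A | ∃ i b, x = b * e i}

section OpInstance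

variable {A}

lemma op_mem_closure {s : Set A} {t : Set Aᵐᵒᵖ} (hst : ∀ x ∈ s, op x ∈ t) {a : A}
    (ha : a ∈ AddSubgroup.closure s) : op a ∈ AddSubgroup.closure t := by
  refine AddSubgroup.closure_induction
    (fun x hx => AddSubgroup.subset_closure (hst x hx)) (by rw [op_zero]; exact zero_mem _)
    (fun x y _ _ hx hy => by rw [op_add]; exact add_mem hx hy)
    (fun x _ hx => by rw [op_neg]; exact neg_mem hx) ha

lemma unop_mem_closure {s : Set Aᵐᵒᵖ} {t : Set A} (hst : ∀ x ∈ s, unop x ∈ t) {a : Aᵐᵒᵖ}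
    (ha : a ∈ AddSubgroup.closure s) : unop a ∈ AddSubgroup.closure t := by
  refine AddSubgroup.closure_induction
    (fun x hx => AddSubgroup.subset_closure (hst x hx)) (by rw [unop_zero]; exact zero_mem _)
    (fun x y _ _ hx hy => by rw [unop_add]; exact add_mem hx hy)
    (fun x _ hx => by rw [unop_neg]; exact neg_mem hx) ha

instance EnoughIdems.instOp {I : Type v} (e : I → A) [EnoughIdems A e] :
    EnoughIdems Aᵐᵒᵖ (fun i => op (e i)) where
  idem i := by rw [← op_mul, idem (e := e) i]
  orth i j h := by
    rw [← op_mul, orth (e := e) j i (Ne.symm h), op_zero]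
  memLeft a := by
    have := op_mem_closure (s := {x : A | ∃ i b, x = b * e i})
      (t := {x : Aᵐᵒᵖ | ∃ i b, x = op (e i) * b}) ?_ (memRight (e := e) a.unop)
    · simpa using this
    · rintro x ⟨i, b, rfl⟩
      exact ⟨i, op b, by rw [← op_mul]⟩
  memRight a := by
    have := op_mem_closure (s := {x : A | ∃ i b, x = e i * b})
      (t := {x : Aᵐᵒᵖ | ∃ i b, x = b * op (e i)}) ?_ (memLeft (e := e) a.unop)
    · simpa using this
    · rintro x ⟨i, b, rfl⟩
      exact ⟨i, op b, by rw [← op_mul]⟩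

end OpInstance

section RA

variable {I : Type v} (e : I → A)

/-- `R_A(M) = ⊕ᵢ eᵢ M`, the largest unital submodule of a premodule `M`. -/
def RA (M : Type w) [AddCommGroup M] [PreMod A M] : AddSubgroup M :=
  AddSubgroup.closure {x : M | ∃ (i : I) (y : M), x = e i • y}

variable {M : Type w} [AddCommGroup M] [PreMod A M]

lemma smul_mem_RA [EnoughIdems A e] (a : A) {m : M} (hm : m ∈ RA A e M) :
    a • m ∈ RA A e M := by
  have key : ∀ b : A, b ∈ AddSubgroup.closure {x : A | ∃ i c, x = e i * c} →
      ∀ y : M, b • y ∈ RA A e M := by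
    intro b hb
    refine AddSubgroup.closure_induction ?_ ?_ ?_ ?_ hb
    · rintro x ⟨i, c, rfl⟩ y
      rw [PreMod.mul_smul']
      exact AddSubgroup.subset_closure ⟨i, c • y, rfl⟩
    · intro y
      rw [PreMod.pzero_smul]
      exact zero_mem _
    · intro x y _ _ hx hy z
      rw [PreMod.add_smul']
      exact add_mem (hx z) (hy z)
    · intro x _ hx y
      rw [PreMod.pneg_smul]
      exact neg_mem (hx y)
  refine AddSubgroup.closure_induction ?_ ?_ ?_ ?_ hm
  · rintro x ⟨i, y, rfl⟩
    rw [← PreMod.mul_smul']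
    exact key _ (EnoughIdems.memLeft (e := e) (a * e i)) y
  · rw [PreMod.psmul_zero]
    exact zero_mem _
  · intro x y _ _ hx hy
    rw [PreMod.smul_add']
    exact add_mem hx hy
  · intro x _ hx
    rw [PreMod.psmul_neg]
    exact neg_mem hx

instance RA.instPreMod [EnoughIdems A e] : PreMod A ↥(RA A e M) where
  smul a x := ⟨a • x.1, smul_mem_RA A e a x.2⟩
  smul_add' a x y := Subtype.ext (PreMod.smul_add' a x.1 y.1)
  add_smul' a b x := Subtype.ext (PreMod.add_smul' a b x.1)
  mul_smul' a b x := Subtype.ext (PreMod.mul_smul' a b x.1)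

lemma RA.coe_smul [EnoughIdems A e] (a : A) (x : ↥(RA A e M)) :
    ((a • x : ↥(RA A e M)) : M) = a • (x : M) := rfl

/-- A premodule is unital when it coincides with its largest unital submodule. -/
def IsUnital (M : Type w) [AddCommGroup M] [PreMod A M] : Prop :=
  ∀ m : M, m ∈ RA A e M

end RA

section Ideals

/-- The left ideal `A·u = {x | x·u = x}` (for `u` idempotent), as a left premodule. -/
def rIdl (u : A) : AddSubgroup A where
  carrier := {x | x * u = x}
  zero_mem' := zero_mul u
  add_mem' := by
    intro x y hx hy
    show (x + y) * u = x + y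
    rw [add_mul, hx, hy]
  neg_mem' := by
    intro x hx
    show (-x) * u = -x
    rw [neg_mul, hx]

instance rIdl.instPreMod (u : A) : PreMod A ↥(rIdl A u) where
  smul a x := ⟨a * x.1, by
    have hx : x.1 * u = x.1 := x.2
    show (a * x.1) * u = a * x.1
    rw [mul_assoc, hx]⟩
  smul_add' a x y := Subtype.ext (mul_add a x.1 y.1)
  add_smul' a b x := Subtype.ext (add_mul a b x.1)
  mul_smul' a b x := Subtype.ext (mul_assoc a b x.1)

/-- The right ideal `u·A = {x | u·x = x}` (for `u` idempotent), as a right premodule. -/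
def eIdl (u : A) : AddSubgroup A where
  carrier := {x | u * x = x}
  zero_mem' := mul_zero u
  add_mem' := by
    intro x y hx hy
    show u * (x + y) = x + y
    rw [mul_add, hx, hy]
  neg_mem' := by
    intro x hx
    show u * (-x) = -x
    rw [mul_neg, hx]

instance eIdl.instPreMod (u : A) : PreMod Aᵐᵒᵖ ↥(eIdl A u) where
  smul a x := ⟨x.1 * a.unop, by
    have hx : u * x.1 = x.1 := x.2
    show u * (x.1 * a.unop) = x.1 * a.unop
    rw [← mul_assoc, hx]⟩
  smul_add' a x y := Subtype.ext (add_mul x.1 y.1 a.unop)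
  add_smul' a b x := Subtype.ext (by show x.1 * (a + b).unop = x.1 * a.unop + x.1 * b.unop; rw [unop_add, mul_add])
  mul_smul' a b x := Subtype.ext (by show x.1 * (a * b).unop = (x.1 * b.unop) * a.unop; rw [unop_mul, mul_assoc])

/-- The image `u•M` of scalar multiplication by `u`, as an additive subgroup. -/
def eSMulRange (u : A) (M : Type w) [AddCommGroup M] [PreMod A M] : AddSubgroup M :=
  (PreMod.smulHom M u).range

end Ideals

end EIMod
namespace EIMod

open PreMod MulOpposite

section Tensor

variable (A : Type u) [NonUnitalRing A]
variable (N : Type w) [AddCommGroup N] [PreMod Aᵐᵒᵖ N]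
variable (M : Type w') [AddCommGroup M] [PreMod A M]

/-- Bilinearity and balancing relations defining the tensor product `N ⊗_A M`. -/
def TensorRels : AddSubgroup (FreeAbelianGroup (N × M)) :=
  AddSubgroup.closure
    ({z | ∃ (n₁ : N) (n₂ : N) (m : M), z = FreeAbelianGroup.of (n₁ + n₂, m)
        - FreeAbelianGroup.of (n₁, m) - FreeAbelianGroup.of (n₂, m)} ∪
     {z | ∃ (n : N) (m₁ : M) (m₂ : M), z = FreeAbelianGroup.of (n, m₁ + m₂)
        - FreeAbelianGroup.of (n, m₁) - FreeAbelianGroup.of (n, m₂)} ∪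
     {z | ∃ (n : N) (a : A) (m : M), z = FreeAbelianGroup.of (op a • n, m)
        - FreeAbelianGroup.of (n, a • m)})

/-- The tensor product `N ⊗_A M` of a right `A`-premodule and a left `A`-premodule. -/
def Tensor : Type max w w' := FreeAbelianGroup (N × M) ⧸ TensorRels A N M

instance : AddCommGroup (Tensor A N M) :=
  inferInstanceAs (AddCommGroup (FreeAbelianGroup (N × M) ⧸ TensorRels A N M))

/-- The canonical generator `n ⊗ m` of `N ⊗_A M`. -/
def Tensor.mk (n : N) (m : M) : Tensor A N M :=
  QuotientAddGroup.mk (FreeAbelianGroup.of (n, m))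

variable {A N M}
variable {N' : Type w₂} [AddCommGroup N'] [PreMod Aᵐᵒᵖ N']
variable {M' : Type w₃} [AddCommGroup M'] [PreMod A M']

/-- Functoriality of the tensor product in both variables, with respect to `A`-linear maps. -/
noncomputable def Tensor.map (f : N →+ N') (g : M →+ M')
    (hf : ∀ (a : A) (n : N), f (op a • n) = op a • f n)
    (hg : ∀ (a : A) (m : M), g (a • m) = a • g m) :
    Tensor A N M →+ Tensor A N' M' :=
  QuotientAddGroup.map _ _ (FreeAbelianGroup.lift fun p => FreeAbelianGroup.of (f p.1, g p.2))
    (by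
      refine (AddSubgroup.closure_le _).mpr ?_
      rintro z ((⟨n₁, n₂, m, rfl⟩ | ⟨n, m₁, m₂, rfl⟩) | ⟨n, a, m, rfl⟩) <;>
        refine AddSubgroup.mem_comap.mpr ?_
      · rw [map_sub, map_sub, FreeAbelianGroup.lift_apply_of, FreeAbelianGroup.lift_apply_of,
          FreeAbelianGroup.lift_apply_of]
        exact AddSubgroup.subset_closure
          (Or.inl (Or.inl ⟨f n₁, f n₂, g m, by rw [map_add]⟩))
      · rw [map_sub, map_sub, FreeAbelianGroup.lift_apply_of, FreeAbelianGroup.lift_apply_of,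
          FreeAbelianGroup.lift_apply_of]
        exact AddSubgroup.subset_closure
          (Or.inl (Or.inr ⟨f n, g m₁, g m₂, by rw [map_add]⟩))
      · rw [map_sub, FreeAbelianGroup.lift_apply_of, FreeAbelianGroup.lift_apply_of]
        exact AddSubgroup.subset_closure
          (Or.inr ⟨f n, a, g m, by rw [hf, hg]⟩))

lemma Tensor.map_mk (f : N →+ N') (g : M →+ M')
    (hf : ∀ (a : A) (n : N), f (op a • n) = op a • f n)
    (hg : ∀ (a : A) (m : M), g (a • m) = a • g m) (n : N) (m : M) :
    Tensor.map f g hf hg (Tensor.mk A N M n m) = Tensor.mk A N' M' (f n) (g m) := by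
  show QuotientAddGroup.map _ _ _ _ _ = _
  rw [Tensor.mk]
  exact congrArg (QuotientAddGroup.mk' (TensorRels A N' M')) (FreeAbelianGroup.lift_apply_of _ _)

end Tensor

section TorExt

variable (A : Type u) [NonUnitalRing A] {I : Type v} (e : I → A)
variable (M : Type w) [AddCommGroup M] [PreMod A M]

/-- The canonical `A`-linear surjection from the canonical free cover
`(I × M) →₀ A` onto a unital module `M`, `single (i, m) a ↦ (a·eᵢ)·m`. -/
noncomputable def covHom : ((I × M) →₀ A) →+ M :=
  Finsupp.liftAddHom (fun p =>
    AddMonoidHom.mk' (fun a => (a * e p.1) • p.2)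
      (fun a b => by
        show ((a + b) * e p.1) • p.2 = (a * e p.1) • p.2 + (b * e p.1) • p.2
        rw [add_mul, PreMod.add_smul']))

lemma covHom_single (p : I × M) (a : A) :
    covHom A e M (Finsupp.single p a) = (a * e p.1) • p.2 := by
  rw [covHom, Finsupp.liftAddHom_apply_single]
  rfl

lemma covHom_linear (a : A) (f : (I × M) →₀ A) :
    covHom A e M (a • f) = a • covHom A e M f := by
  induction f using Finsupp.induction with
  | zero => rw [PreMod.psmul_zero, map_zero, PreMod.psmul_zero]
  | single_add p b f _ _ ih =>
    rw [PreMod.smul_add', map_add, map_add, PreMod.smul_add', ih,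
      PreMod.finsupp_smul_single, covHom_single, covHom_single, mul_assoc,
      PreMod.mul_smul']

/-- The first syzygy of the canonical free cover of `M`. -/
noncomputable def KK : AddSubgroup ((I × M) →₀ A) := (covHom A e M).ker

noncomputable instance KK.instPreMod : PreMod A ↥(KK A e M) where
  smul a x := ⟨a • x.1, by
    have hx : covHom A e M x.1 = 0 := x.2
    show covHom A e M (a • x.1) = 0
    rw [covHom_linear, hx, PreMod.psmul_zero]⟩
  smul_add' a x y := Subtype.ext (PreMod.smul_add' a x.1 y.1)
  add_smul' a b x := Subtype.ext (PreMod.add_smul' a b x.1)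
  mul_smul' a b x := Subtype.ext (PreMod.mul_smul' a b x.1)

variable (N : Type w') [AddCommGroup N] [PreMod Aᵐᵒᵖ N]

/-- The map `N ⊗_A K → N ⊗_A (⊕ A·eᵢ)` induced by the first syzygy of `M`. -/
noncomputable def torMap : Tensor A N ↥(KK A e M) →+ Tensor A N ((I × M) →₀ A) :=
  Tensor.map (AddMonoidHom.id N) ((KK A e M).subtype) (fun _ _ => rfl) (fun _ _ => rfl)

/-- `Tor₁^A(N, M)`, computed using the canonical free presentation of `M`. -/
noncomputable def Tor1 : AddSubgroup (Tensor A N ↥(KK A e M)) := (torMap A e M N).ker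

variable (X : Type w') [AddCommGroup X] [PreMod A X]

/-- Restriction of `A`-linear maps along the inclusion of the first syzygy of `M`. -/
noncomputable def resHom :
    ↥(LHom A ((I × M) →₀ A) X) →+ ↥(LHom A ↥(KK A e M) X) :=
  AddMonoidHom.mk'
    (fun g => ⟨((g : ((I × M) →₀ A) →+ X)).comp (KK A e M).subtype,
      fun a k => (g.2 : ∀ (a : A) (y : (I × M) →₀ A), (g : ((I × M) →₀ A) →+ X) (a • y)
        = a • (g : ((I × M) →₀ A) →+ X) y) a k.1⟩)
    (fun g g' => Subtype.ext (AddMonoidHom.ext (fun k => rfl)))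

/-- `Ext¹_A(M, X)`, computed using the canonical free presentation of `M`. -/
noncomputable def Ext1 :=
  (↥(LHom A ↥(KK A e M) X)) ⧸ (resHom A e M X).range

noncomputable instance : AddCommGroup (Ext1 A e M X) :=
  inferInstanceAs (AddCommGroup ((↥(LHom A ↥(KK A e M) X)) ⧸ (resHom A e M X).range))

end TorExt

section Character

/-- The divisible group `ℚ/ℤ`. -/
abbrev QZ : Type := AddCircle (1 : ℚ)

variable (A : Type u) [NonUnitalRing A] {I : Type v} (e : I → A)
variable (N : Type w) [AddCommGroup N] [PreMod Aᵐᵒᵖ N]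

/-- The full character premodule `Hom_ℤ(N, ℚ/ℤ)` of a right `A`-premodule `N`,
with action `(a·f)(n) = f(n·a)`. -/
instance instCharPreMod : PreMod A (N →+ QZ) where
  smul a f := f.comp (PreMod.smulHom N (op a))
  smul_add' a f g := by
    show (f + g).comp _ = f.comp _ + g.comp _
    rw [AddMonoidHom.add_comp]
  add_smul' a b f := by
    ext n
    show f (op (a + b) • n) = f (op a • n) + f (op b • n)
    rw [op_add, PreMod.add_smul', map_add]
  mul_smul' a b f := by
    ext n
    show f (op (a * b) • n) = f (op b • (op a • n))
    rw [op_mul, PreMod.mul_smul']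

lemma char_smul_apply (a : A) (f : N →+ QZ) (n : N) :
    (a • f) n = f (op a • n) := rfl

/-- The unital character module `N⁺ = ⊕ᵢ Hom_ℤ(N·eᵢ, ℚ/ℤ) = R_A(Hom_ℤ(N, ℚ/ℤ))`. -/
noncomputable abbrev CharMod [EnoughIdems A e] : Type w :=
  ↥(RA A e (N →+ QZ))

end Character

section FPn

variable (A : Type u) [NonUnitalRing A] {I : Type v} (e : I → A)

/-- A finite direct sum of standard left ideals `A·u j`. -/
abbrev FinFree {k : ℕ} (u : Fin k → A) : Type u := ∀ j : Fin k, ↥(rIdl A (u j))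

/-- A left premodule over a ring with enough idempotents is of type `FPₙ` if it admits an
exact resolution `Pₙ → ⋯ → P₀ → F → 0` whose terms are finite direct sums of the standard
projective modules `A·eᵢ`. -/
def IsFPn (n : ℕ) (F : Type w) [AddCommGroup F] [PreMod A F] : Prop :=
  ∃ (k : ℕ → ℕ) (ι : ∀ s : ℕ, Fin (k s) → I)
    (d : ∀ s : ℕ, ↥(LHom A (FinFree A fun j => e (ι (s + 1) j))
          (FinFree A fun j => e (ι s j))))
    (g : ↥(LHom A (FinFree A fun j => e (ι 0 j)) F)),
    Function.Surjective ⇑(g : (FinFree A fun j => e (ι 0 j)) →+ F) ∧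
    (0 < n → AddMonoidHom.range
        ((d 0 : (FinFree A fun j => e (ι 1 j)) →+ (FinFree A fun j => e (ι 0 j))))
      = AddMonoidHom.ker (g : (FinFree A fun j => e (ι 0 j)) →+ F)) ∧
    (∀ s : ℕ, s + 1 < n → AddMonoidHom.range
        ((d (s + 1) : (FinFree A fun j => e (ι (s + 2) j)) →+ (FinFree A fun j => e (ι (s + 1) j))))
      = AddMonoidHom.ker
        ((d s : (FinFree A fun j => e (ι (s + 1) j)) →+ (FinFree A fun j => e (ι s j)))))

end FPn

end EIMod

open EIMod PreMod MulOpposite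

set_option maxHeartbeats 1000000

/-- The map `(∏^u_α N_α) ⊗_A K → N_α ⊗_A K` induced by the `α`-th projection from the
product `∏^u_α N_α = R_A(∏_α N_α)` of unital right `A`-modules. -/
noncomputable def projTorMap
    (A : Type u) [NonUnitalRing A] {I : Type v} (e : I → A) [EnoughIdems A e]
    (S : Type w) (N : S → Type u) [∀ α, AddCommGroup (N α)] [∀ α, PreMod Aᵐᵒᵖ (N α)]
    (F : Type u) [AddCommGroup F] [PreMod A F] (α : S) :
    Tensor A (↥(RA Aᵐᵒᵖ (fun i => op (e i)) (∀ β, N β))) ↥(KK A e F)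
      →+ Tensor A (N α) ↥(KK A e F) :=
  Tensor.map (A := A) (N' := N α)
    (AddMonoidHom.mk' (fun x : ↥(RA Aᵐᵒᵖ (fun i => op (e i)) (∀ β, N β)) => (x : ∀ β, N β) α)
      (fun x y => rfl))
    (AddMonoidHom.id ↥(KK A e F)) (fun a n => by rfl) (fun a m => by rfl)

namespace EIMod

section Basic

variable {A : Type u} [NonUnitalRing A]
variable {N : Type w} [AddCommGroup N] [PreMod Aᵐᵒᵖ N]
variable {M : Type w'} [AddCommGroup M] [PreMod A M]

lemma Tensor.mk_add_left (n₁ n₂ : N) (m : M) :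
    Tensor.mk A N M (n₁ + n₂) m = Tensor.mk A N M n₁ m + Tensor.mk A N M n₂ m := by
  have h : FreeAbelianGroup.of ((n₁ + n₂, m) : N × M) - FreeAbelianGroup.of (n₁, m)
      - FreeAbelianGroup.of (n₂, m) ∈ TensorRels A N M :=
    AddSubgroup.subset_closure (Or.inl (Or.inl ⟨n₁, n₂, m, rfl⟩))
  have h2 : (QuotientAddGroup.mk' (TensorRels A N M)) (FreeAbelianGroup.of ((n₁ + n₂, m) : N × M)
      - FreeAbelianGroup.of (n₁, m) - FreeAbelianGroup.of (n₂, m)) = 0 :=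
    (QuotientAddGroup.eq_zero_iff _).mpr h
  rw [map_sub, map_sub, sub_sub, sub_eq_zero] at h2
  exact h2

lemma Tensor.mk_add_right (n : N) (m₁ m₂ : M) :
    Tensor.mk A N M n (m₁ + m₂) = Tensor.mk A N M n m₁ + Tensor.mk A N M n m₂ := by
  have h : FreeAbelianGroup.of ((n, m₁ + m₂) : N × M) - FreeAbelianGroup.of (n, m₁)
      - FreeAbelianGroup.of (n, m₂) ∈ TensorRels A N M :=
    AddSubgroup.subset_closure (Or.inl (Or.inr ⟨n, m₁, m₂, rfl⟩))
  have h2 : (QuotientAddGroup.mk' (TensorRels A N M)) (FreeAbelianGroup.of ((n, m₁ + m₂) : N × M)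
      - FreeAbelianGroup.of (n, m₁) - FreeAbelianGroup.of (n, m₂)) = 0 :=
    (QuotientAddGroup.eq_zero_iff _).mpr h
  rw [map_sub, map_sub, sub_sub, sub_eq_zero] at h2
  exact h2

lemma Tensor.mk_op_smul (a : A) (n : N) (m : M) :
    Tensor.mk A N M (op a • n) m = Tensor.mk A N M n (a • m) := by
  have h : FreeAbelianGroup.of ((op a • n, m) : N × M) - FreeAbelianGroup.of (n, a • m)
      ∈ TensorRels A N M :=
    AddSubgroup.subset_closure (Or.inr ⟨n, a, m, rfl⟩)
  have h2 : (QuotientAddGroup.mk' (TensorRels A N M)) (FreeAbelianGroup.of ((op a • n, m) : N × M)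
      - FreeAbelianGroup.of (n, a • m)) = 0 :=
    (QuotientAddGroup.eq_zero_iff _).mpr h
  rw [map_sub, sub_eq_zero] at h2
  exact h2

lemma Tensor.mk_zero_left (m : M) : Tensor.mk A N M 0 m = 0 := by
  have := Tensor.mk_add_left (A := A) (0 : N) 0 m
  rw [add_zero] at this
  exact (left_eq_add.mp this)

lemma Tensor.mk_zero_right (n : N) : Tensor.mk A N M n 0 = 0 := by
  have := Tensor.mk_add_right (A := A) n (0 : M) 0
  rw [add_zero] at this
  exact (left_eq_add.mp this)

lemma Tensor.mk_neg_left (n : N) (m : M) :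
    Tensor.mk A N M (-n) m = - Tensor.mk A N M n m := by
  have := Tensor.mk_add_left (A := A) n (-n) m
  rw [add_neg_cancel, Tensor.mk_zero_left] at this
  exact (eq_neg_of_add_eq_zero_right this.symm)

/-- `n ⊗ ·` as an additive map. -/
def Tensor.mkRight (n : N) : M →+ Tensor A N M :=
  AddMonoidHom.mk' (fun m => Tensor.mk A N M n m) (Tensor.mk_add_right n)

@[simp] lemma Tensor.mkRight_apply (n : N) (m : M) :
    Tensor.mkRight n m = Tensor.mk A N M n m := rfl

lemma Tensor.ind {C : Tensor A N M → Prop}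
    (Hmk : ∀ n m, C (Tensor.mk A N M n m))
    (Hadd : ∀ x y, C x → C y → C (x + y)) : ∀ z, C z := by
  intro z
  obtain ⟨w, rfl⟩ := QuotientAddGroup.mk_surjective z
  refine FreeAbelianGroup.induction_on w ?_ ?_ ?_ ?_
  · have := Hmk 0 (0 : M)
    rwa [Tensor.mk_zero_left] at this
  · exact fun p => Hmk p.1 p.2
  · intro p hp
    have h1 : C (Tensor.mk A N M (-p.1) p.2) := Hmk _ _
    rw [Tensor.mk_neg_left] at h1
    exact h1
  · intro x y hx hy
    exact Hadd _ _ hx hy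

lemma Tensor.hom_ext {X : Type w₂} [AddCommGroup X] {f g : Tensor A N M →+ X}
    (hfg : ∀ n m, f (Tensor.mk A N M n m) = g (Tensor.mk A N M n m)) : f = g :=
  AddMonoidHom.ext (Tensor.ind hfg (fun x y hx hy => by rw [map_add, map_add, hx, hy]))

/-- Universal property of the tensor product: a balanced biadditive map induces an
additive map on the tensor product. -/
noncomputable def Tensor.lift {X : Type w₂} [AddCommGroup X] (b : N →+ M →+ X)
    (hb : ∀ (a : A) (n : N) (m : M), b (op a • n) m = b n (a • m)) :
    Tensor A N M →+ X :=
  QuotientAddGroup.lift _ (FreeAbelianGroup.lift fun p => b p.1 p.2) (by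
    intro z hz
    refine AddSubgroup.closure_induction ?_ ?_ ?_ ?_ hz
    · rintro x ((⟨n₁, n₂, m, rfl⟩ | ⟨n, m₁, m₂, rfl⟩) | ⟨n, a, m, rfl⟩) <;>
        simp [map_sub, FreeAbelianGroup.lift_apply_of, hb]
    · exact zero_mem _
    · intro x y _ _ hx hy
      exact add_mem hx hy
    · intro x _ hx
      exact neg_mem hx)

@[simp] lemma Tensor.lift_mk {X : Type w₂} [AddCommGroup X] (b : N →+ M →+ X)
    (hb : ∀ (a : A) (n : N) (m : M), b (op a • n) m = b n (a • m)) (n : N) (m : M) :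
    Tensor.lift b hb (Tensor.mk A N M n m) = b n m := by
  show QuotientAddGroup.lift _ _ _ (QuotientAddGroup.mk _) = _
  rw [QuotientAddGroup.lift_mk']
  exact FreeAbelianGroup.lift_apply_of _ _

end Basic

section Exactness

variable {A : Type u} [NonUnitalRing A]
variable {N : Type w} [AddCommGroup N] [PreMod Aᵐᵒᵖ N]
variable {M₂ : Type w'} [AddCommGroup M₂] [PreMod A M₂]
variable {M₁ : Type w₂} [AddCommGroup M₁] [PreMod A M₁]
variable {M₀ : Type w₃} [AddCommGroup M₀] [PreMod A M₀]

lemma Tensor.map_apply_eq {N' : Type w₂} [AddCommGroup N'] [PreMod Aᵐᵒᵖ N']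
    {M' : Type w₃} [AddCommGroup M'] [PreMod A M']
    {f f₂ : N →+ N'} {g g₂ : M₂ →+ M'}
    (hff : ∀ n, f n = f₂ n) (hgg : ∀ m, g m = g₂ m)
    (hf : ∀ (a : A) (n : N), f (op a • n) = op a • f n)
    (hg : ∀ (a : A) (m : M₂), g (a • m) = a • g m)
    (hf₂ : ∀ (a : A) (n : N), f₂ (op a • n) = op a • f₂ n)
    (hg₂ : ∀ (a : A) (m : M₂), g₂ (a • m) = a • g₂ m)
    (z : Tensor A N M₂) :
    Tensor.map f g hf hg z = Tensor.map f₂ g₂ hf₂ hg₂ z := by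
  refine Tensor.ind (C := fun z => Tensor.map f g hf hg z = Tensor.map f₂ g₂ hf₂ hg₂ z)
    ?_ ?_ z
  · intro n m
    rw [Tensor.map_mk, Tensor.map_mk, hff, hgg]
  · intro x y hx hy
    rw [map_add, map_add, hx, hy]

lemma Tensor.map_map {N' : Type w₂} [AddCommGroup N'] [PreMod Aᵐᵒᵖ N']
    {N'' : Type w₃} [AddCommGroup N''] [PreMod Aᵐᵒᵖ N'']
    {M' : Type w₂} [AddCommGroup M'] [PreMod A M']
    {M'' : Type w₃} [AddCommGroup M''] [PreMod A M'']
    (f : N →+ N') (f' : N' →+ N'') (g : M₂ →+ M') (g' : M' →+ M'')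
    (hf : ∀ (a : A) (n : N), f (op a • n) = op a • f n)
    (hf' : ∀ (a : A) (n : N'), f' (op a • n) = op a • f' n)
    (hg : ∀ (a : A) (m : M₂), g (a • m) = a • g m)
    (hg' : ∀ (a : A) (m : M'), g' (a • m) = a • g' m)
    (z : Tensor A N M₂) :
    Tensor.map f' g' hf' hg' (Tensor.map f g hf hg z)
      = Tensor.map (f'.comp f) (g'.comp g)
          (fun a n => by simp only [AddMonoidHom.comp_apply, hf, hf'])
          (fun a m => by simp only [AddMonoidHom.comp_apply, hg, hg']) z := by
  refine Tensor.ind (C := fun z => Tensor.map f' g' hf' hg' (Tensor.map f g hf hg z)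
      = Tensor.map (f'.comp f) (g'.comp g) _ _ z) ?_ ?_ z
  · intro n m
    rw [Tensor.map_mk, Tensor.map_mk, Tensor.map_mk]
    rfl
  · intro x y hx hy
    rw [map_add, map_add, map_add, hx, hy]

lemma Tensor.map_eq_zero {M' : Type w₃} [AddCommGroup M'] [PreMod A M']
    (f : N →+ N) (g : M₂ →+ M')
    (hf : ∀ (a : A) (n : N), f (op a • n) = op a • f n)
    (hg : ∀ (a : A) (m : M₂), g (a • m) = a • g m)
    (hg0 : ∀ m, g m = 0) (z : Tensor A N M₂) :
    Tensor.map f g hf hg z = 0 := by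
  refine Tensor.ind (C := fun z => Tensor.map f g hf hg z = 0) ?_ ?_ z
  · intro n m
    rw [Tensor.map_mk, hg0, Tensor.mk_zero_right]
  · intro x y hx hy
    rw [map_add, hx, hy, add_zero]

lemma Tensor.map_id_surjective (h : M₁ →+ M₀)
    (hh : ∀ (a : A) (m : M₁), h (a • m) = a • h m)
    (hs : Function.Surjective h) :
    Function.Surjective (Tensor.map (AddMonoidHom.id N) h (fun _ _ => rfl) hh) := by
  refine Tensor.ind ?_ ?_
  · intro n m
    obtain ⟨m', rfl⟩ := hs m
    exact ⟨Tensor.mk A N M₁ n m', Tensor.map_mk _ _ _ _ _ _⟩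
  · rintro x y ⟨x', rfl⟩ ⟨y', rfl⟩
    exact ⟨x' + y', map_add _ _ _⟩

lemma Tensor.exact_of_exact (f : M₂ →+ M₁) (h : M₁ →+ M₀)
    (hf : ∀ (a : A) (m : M₂), f (a • m) = a • f m)
    (hh : ∀ (a : A) (m : M₁), h (a • m) = a • h m)
    (hs : Function.Surjective h) (hex : f.range = h.ker)
    (z : Tensor A N M₁)
    (hz : Tensor.map (AddMonoidHom.id N) h (fun _ _ => rfl) hh z = 0) :
    z ∈ (Tensor.map (AddMonoidHom.id N) f (fun _ _ => rfl) hf).range := by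
  classical
  set R := (Tensor.map (AddMonoidHom.id N) f (fun _ _ => rfl) hf).range with hR
  let σ : M₀ → M₁ := Function.surjInv hs
  have hσ : ∀ m₀, h (σ m₀) = m₀ := Function.surjInv_eq hs
  have key : ∀ (n : N) (m m' : M₁), h m = h m' →
      ((QuotientAddGroup.mk (Tensor.mk A N M₁ n m) : Tensor A N M₁ ⧸ R))
        = QuotientAddGroup.mk (Tensor.mk A N M₁ n m') := by
    intro n m m' hmm
    have hmem : m - m' ∈ f.range := by
      rw [hex, AddMonoidHom.mem_ker, map_sub, hmm, sub_self]
    obtain ⟨y, hy⟩ := hmem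
    rw [QuotientAddGroup.eq_iff_sub_mem,
      show Tensor.mk A N M₁ n m - Tensor.mk A N M₁ n m'
        = Tensor.mk A N M₁ n (m - m') from (map_sub (Tensor.mkRight n) m m').symm, ← hy]
    exact ⟨Tensor.mk A N M₂ n y, Tensor.map_mk _ _ _ _ _ _⟩
  let binner : N → M₀ →+ Tensor A N M₁ ⧸ R := fun n =>
    AddMonoidHom.mk' (fun m₀ => QuotientAddGroup.mk (Tensor.mk A N M₁ n (σ m₀)))
      (fun m₀ m₀' => by
        have h1 : ((QuotientAddGroup.mk (Tensor.mk A N M₁ n (σ (m₀ + m₀'))) : _ ⧸ R))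
            = QuotientAddGroup.mk (Tensor.mk A N M₁ n (σ m₀ + σ m₀')) :=
          key n _ _ (by rw [hσ, map_add, hσ, hσ])
        show ((QuotientAddGroup.mk (Tensor.mk A N M₁ n (σ (m₀ + m₀'))) : _ ⧸ R))
            = QuotientAddGroup.mk (Tensor.mk A N M₁ n (σ m₀))
              + QuotientAddGroup.mk (Tensor.mk A N M₁ n (σ m₀'))
        rw [h1, Tensor.mk_add_right]
        rfl)
  have hbal : ∀ (a : A) (n : N) (m₀ : M₀), binner (op a • n) m₀ = binner n (a • m₀) := by
    intro a n m₀
    show QuotientAddGroup.mk (Tensor.mk A N M₁ (op a • n) (σ m₀))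
        = QuotientAddGroup.mk (Tensor.mk A N M₁ n (σ (a • m₀)))
    rw [Tensor.mk_op_smul]
    exact key n _ _ (by rw [hh, hσ, hσ])
  let b : N →+ M₀ →+ Tensor A N M₁ ⧸ R :=
    AddMonoidHom.mk' binner (fun n n' => AddMonoidHom.ext fun m₀ => by
      show QuotientAddGroup.mk (Tensor.mk A N M₁ (n + n') (σ m₀)) = _
      rw [Tensor.mk_add_left]
      rfl)
  let H : Tensor A N M₀ →+ Tensor A N M₁ ⧸ R := Tensor.lift b hbal
  have hcomp : H.comp (Tensor.map (AddMonoidHom.id N) h (fun _ _ => rfl) hh)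
      = QuotientAddGroup.mk' R := by
    refine Tensor.hom_ext (fun n m => ?_)
    show H (Tensor.map (AddMonoidHom.id N) h (fun _ _ => rfl) hh (Tensor.mk A N M₁ n m))
        = QuotientAddGroup.mk (Tensor.mk A N M₁ n m)
    rw [Tensor.map_mk]
    show Tensor.lift b hbal (Tensor.mk A N M₀ _ (h m)) = _
    refine (Tensor.lift_mk (A := A) b hbal _ _).trans ?_
    exact key n _ _ (hσ _)
  have : QuotientAddGroup.mk' R z = 0 := by
    have h2 := congrArg (fun (φ : Tensor A N M₁ →+ Tensor A N M₁ ⧸ R) => φ z) hcomp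
    simp only [AddMonoidHom.comp_apply] at h2
    rw [← h2, hz, map_zero]
  exact (QuotientAddGroup.eq_zero_iff z).mp this

end Exactness

section FinFreeLam

variable {A : Type u} [NonUnitalRing A] {I : Type v} {e : I → A} [EnoughIdems A e]
variable {k : ℕ} (κ : Fin k → I)

lemma psmul_sub {M : Type w} [AddCommGroup M] [PreMod A M] (a : A) (m n : M) :
    a • (m - n) = a • m - a • n := by
  rw [sub_eq_add_neg, PreMod.smul_add', PreMod.psmul_neg, ← sub_eq_add_neg]

/-- The `j`-th canonical basis element of a finite free module. -/
noncomputable def dlt (j : Fin k) : FinFree A (fun j => e (κ j)) :=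
  Pi.single j ⟨e (κ j), EnoughIdems.idem (e := e) (κ j)⟩

lemma smul_dlt (q : FinFree A (fun j => e (κ j))) (j : Fin k) :
    (q j : A) • dlt (e := e) κ j = Pi.single j (q j) := by
  funext j'
  rcases eq_or_ne j' j with rfl | hne
  · show (q j' : A) • (dlt (e := e) κ j') j' = _
    rw [show (dlt (e := e) κ j') j' = ⟨e (κ j'), EnoughIdems.idem (e := e) (κ j')⟩ from
        Pi.single_eq_same _ _, Pi.single_eq_same]
    exact Subtype.ext ((q j').2)
  · show (q j : A) • (dlt (e := e) κ j) j' = _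
    rw [show (dlt (e := e) κ j) j' = 0 from Pi.single_eq_of_ne hne _,
      Pi.single_eq_of_ne hne]
    exact PreMod.psmul_zero _

lemma sum_dlt_repr (q : FinFree A (fun j => e (κ j))) :
    ∑ j, (q j : A) • dlt (e := e) κ j = q := by
  rw [Finset.sum_congr rfl (fun j (_ : j ∈ Finset.univ) => smul_dlt κ q j)]
  exact Finset.univ_sum_single q

lemma e_smul_dlt (j : Fin k) : (e (κ j)) • dlt (e := e) κ j = dlt (e := e) κ j := by
  funext j'
  rcases eq_or_ne j' j with rfl | hne
  · show (e (κ j')) • (dlt (e := e) κ j') j' = (dlt (e := e) κ j') j'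
    rw [show (dlt (e := e) κ j') j' = ⟨e (κ j'), EnoughIdems.idem (e := e) (κ j')⟩ from
        Pi.single_eq_same _ _]
    exact Subtype.ext (EnoughIdems.idem (e := e) (κ j'))
  · show (e (κ j)) • (dlt (e := e) κ j) j' = (dlt (e := e) κ j) j'
    rw [show (dlt (e := e) κ j) j' = 0 from Pi.single_eq_of_ne hne _]
    exact PreMod.psmul_zero _

variable {X : Type w₂} [AddCommGroup X] [PreMod Aᵐᵒᵖ X]

/-- The `j`-th "coefficient" map `X ⊗ Q → X`. -/
noncomputable def muHom (j : Fin k) :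
    Tensor A X (FinFree A (fun j => e (κ j))) →+ X :=
  Tensor.lift (AddMonoidHom.mk' (fun n => AddMonoidHom.mk'
      (fun q => op (q j : A) • n)
      (fun q q' => by
        show op (((q + q') j : A)) • n = _
        rw [show (((q + q') j : A)) = (q j : A) + (q' j : A) from rfl, op_add,
          PreMod.add_smul']))
    (fun n n' => AddMonoidHom.ext fun q => PreMod.smul_add' _ _ _))
  (fun a n q => by
    show op (q j : A) • (op a • n) = op (((a • q) j : A)) • n
    rw [show (((a • q) j : A)) = a * (q j : A) from rfl, ← PreMod.mul_smul', ← op_mul])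

lemma muHom_mk (j : Fin k) (n : X) (q : FinFree A (fun j => e (κ j))) :
    muHom (e := e) κ j (Tensor.mk A X _ n q) = op (q j : A) • n := by
  rw [muHom, Tensor.lift_mk]
  rfl

lemma muHom_fix (j : Fin k) (t : Tensor A X (FinFree A fun j => e (κ j))) :
    op (e (κ j)) • muHom (e := e) κ j t = muHom (e := e) κ j t := by
  have hh : (PreMod.smulHom X (op (e (κ j)))).comp (muHom (e := e) κ j)
      = muHom (e := e) κ j :=
    Tensor.hom_ext (fun n q => by
      rw [AddMonoidHom.comp_apply, muHom_mk]
      show op (e (κ j)) • (op (q j : A) • n) = op (q j : A) • n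
      rw [← PreMod.mul_smul', ← op_mul,
        show ((q j : A) * e (κ j)) = (q j : A) from (q j).2])
  have h2 : (PreMod.smulHom X (op (e (κ j)))).comp (muHom (e := e) κ j) t
      = muHom (e := e) κ j t := by
    rw [hh]
  exact h2

lemma sum_mk_mu (t : Tensor A X (FinFree A fun j => e (κ j))) :
    ∑ j, Tensor.mk A X _ (muHom (e := e) κ j t) (dlt (e := e) κ j) = t := by
  have hh : (∑ j, (AddMonoidHom.mk'
        (fun n => Tensor.mk A X (FinFree A fun j => e (κ j)) n (dlt (e := e) κ j))
        (fun n n' => Tensor.mk_add_left _ _ _)).comp (muHom (e := e) κ j))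
      = AddMonoidHom.id _ := by
    refine Tensor.hom_ext (fun n q => ?_)
    rw [AddMonoidHom.finset_sum_apply]
    have step : ∀ j : Fin k, ((AddMonoidHom.mk'
        (fun n => Tensor.mk A X (FinFree A fun j => e (κ j)) n (dlt (e := e) κ j))
        (fun n n' => Tensor.mk_add_left _ _ _)).comp (muHom (e := e) κ j))
          (Tensor.mk A X _ n q)
        = Tensor.mk A X _ n ((q j : A) • dlt (e := e) κ j) := by
      intro j
      show Tensor.mk A X _ (muHom (e := e) κ j (Tensor.mk A X _ n q)) (dlt (e := e) κ j) = _
      rw [muHom_mk, Tensor.mk_op_smul]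
    rw [Finset.sum_congr rfl (fun j (_ : j ∈ Finset.univ) => step j)]
    exact ((map_sum (Tensor.mkRight (A := A) (M := FinFree A fun j => e (κ j)) n) (fun j => (q j : A) • dlt (e := e) κ j)
      Finset.univ).symm).trans (by rw [sum_dlt_repr]; rfl)
  have h2 : (∑ j, (AddMonoidHom.mk'
        (fun n => Tensor.mk A X (FinFree A fun j => e (κ j)) n (dlt (e := e) κ j))
        (fun n n' => Tensor.mk_add_left _ _ _)).comp (muHom (e := e) κ j)) t = t := by
    rw [hh]
    rfl
  rw [AddMonoidHom.finset_sum_apply] at h2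
  exact h2

end FinFreeLam

section Prod

variable {A : Type u} [NonUnitalRing A] {I : Type v} {e : I → A} [EnoughIdems A e]
variable {S : Type w} {N : S → Type u} [∀ α, AddCommGroup (N α)] [∀ α, PreMod Aᵐᵒᵖ (N α)]

/-- The `α`-th projection from the unital product. -/
def projAdd (α : S) : ↥(RA Aᵐᵒᵖ (fun i => op (e i)) (∀ β, N β)) →+ N α :=
  AddMonoidHom.mk' (fun x => (x : ∀ β, N β) α) (fun x y => rfl)

/-- The `α`-th projection on tensor products. -/
noncomputable def prTensor (M : Type w₂) [AddCommGroup M] [PreMod A M] (α : S) :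
    Tensor A (↥(RA Aᵐᵒᵖ (fun i => op (e i)) (∀ β, N β))) M →+ Tensor A (N α) M :=
  Tensor.map (projAdd (e := e) α) (AddMonoidHom.id M) (fun _ _ => rfl) (fun _ _ => rfl)

lemma prTensor_mk {M : Type w₂} [AddCommGroup M] [PreMod A M] (α : S)
    (x : ↥(RA Aᵐᵒᵖ (fun i => op (e i)) (∀ β, N β))) (m : M) :
    prTensor M α (Tensor.mk A _ M x m) = Tensor.mk A (N α) M ((x : ∀ β, N β) α) m :=
  Tensor.map_mk _ _ _ _ _ _

lemma prTensor_natural {M : Type w₂} [AddCommGroup M] [PreMod A M]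
    {M' : Type w₃} [AddCommGroup M'] [PreMod A M'] (α : S) (ψ : M →+ M')
    (hψ : ∀ (a : A) (m : M), ψ (a • m) = a • ψ m)
    (z : Tensor A (↥(RA Aᵐᵒᵖ (fun i => op (e i)) (∀ β, N β))) M) :
    prTensor M' α (Tensor.map (AddMonoidHom.id _) ψ (fun _ _ => rfl) hψ z)
      = Tensor.map (AddMonoidHom.id _) ψ (fun _ _ => rfl) hψ (prTensor M α z) := by
  have hh : (prTensor (e := e) (N := N) M' α).comp
        (Tensor.map (AddMonoidHom.id _) ψ (fun _ _ => rfl) hψ)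
      = (Tensor.map (AddMonoidHom.id _) ψ (fun _ _ => rfl) hψ).comp (prTensor M α) :=
    Tensor.hom_ext (fun n m => by
      simp only [AddMonoidHom.comp_apply, Tensor.map_mk, prTensor_mk, AddMonoidHom.id_apply])
  have h2 := congrArg (fun φ => φ z) hh
  exact h2

variable {k : ℕ} (κ : Fin k → I)

/-- The natural map `(∏ᵘ N) ⊗ Q → ∏ (N_α ⊗ Q)`. -/
noncomputable def LamHom :
    Tensor A (↥(RA Aᵐᵒᵖ (fun i => op (e i)) (∀ β, N β))) (FinFree A fun j => e (κ j))
      →+ ∀ α, Tensor A (N α) (FinFree A fun j => e (κ j)) :=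
  AddMonoidHom.mk' (fun z α => prTensor (e := e) _ α z) (fun z z' => funext fun α => map_add _ _ _)

lemma mu_tuple_mem (j : Fin k) (t : ∀ α, Tensor A (N α) (FinFree A fun j => e (κ j))) :
    (fun α => muHom (e := e) κ j (t α)) ∈ RA Aᵐᵒᵖ (fun i => op (e i)) (∀ β, N β) :=
  AddSubgroup.subset_closure ⟨κ j, fun α => muHom (e := e) κ j (t α),
    funext fun α => (muHom_fix κ j (t α)).symm⟩

/-- The inverse of `LamHom`. -/
noncomputable def PhiHom :
    (∀ α, Tensor A (N α) (FinFree A fun j => e (κ j)))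
      →+ Tensor A (↥(RA Aᵐᵒᵖ (fun i => op (e i)) (∀ β, N β))) (FinFree A fun j => e (κ j)) :=
  AddMonoidHom.mk'
    (fun t => ∑ j, Tensor.mk A _ _ (⟨fun α => muHom (e := e) κ j (t α), mu_tuple_mem κ j t⟩ :
        ↥(RA Aᵐᵒᵖ (fun i => op (e i)) (∀ β, N β))) (dlt (e := e) κ j))
    (fun t t' => by
      rw [← Finset.sum_add_distrib]
      refine Finset.sum_congr rfl (fun j _ => ?_)
      rw [← Tensor.mk_add_left]
      congr 1
      refine Subtype.ext (funext fun α => ?_)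
      show muHom (e := e) κ j ((t + t') α) = muHom (e := e) κ j (t α)
        + muHom (e := e) κ j (t' α)
      rw [show (t + t') α = t α + t' α from rfl, map_add])

lemma Phi_Lam (z : Tensor A (↥(RA Aᵐᵒᵖ (fun i => op (e i)) (∀ β, N β)))
    (FinFree A fun j => e (κ j))) : PhiHom κ (LamHom κ z) = z := by
  refine Tensor.ind (C := fun z => PhiHom κ (LamHom κ z) = z) ?_ ?_ z
  · intro x q
    show ∑ j, Tensor.mk A _ _ ((⟨fun α => muHom (e := e) κ j (prTensor _ α (Tensor.mk A _ _ x q)),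
        mu_tuple_mem κ j _⟩ : ↥(RA Aᵐᵒᵖ (fun i => op (e i)) (∀ β, N β))))
        (dlt (e := e) κ j) = Tensor.mk A _ _ x q
    have step : ∀ j : Fin k, Tensor.mk A _ _
        ((⟨fun α => muHom (e := e) κ j (prTensor (e := e) _ α (Tensor.mk A _ _ x q)),
          mu_tuple_mem κ j _⟩ : ↥(RA Aᵐᵒᵖ (fun i => op (e i)) (∀ β, N β))))
          (dlt (e := e) κ j)
        = Tensor.mk A _ _ x ((q j : A) • dlt (e := e) κ j) := by
      intro j
      rw [← Tensor.mk_op_smul]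
      congr 1
      refine Subtype.ext (funext fun α => ?_)
      show muHom (e := e) κ j (prTensor (e := e) _ α (Tensor.mk A _ _ x q)) = (op (q j : A) • x :
        ↥(RA Aᵐᵒᵖ (fun i => op (e i)) (∀ β, N β))).1 α
      rw [prTensor_mk, muHom_mk]
      rfl
    rw [Finset.sum_congr rfl (fun j (_ : j ∈ Finset.univ) => step j)]
    exact ((map_sum (Tensor.mkRight (A := A) (M := FinFree A fun j => e (κ j)) x) (fun j => (q j : A) • dlt (e := e) κ j)
      Finset.univ).symm).trans (by rw [sum_dlt_repr]; rfl)
  · intro x y hx hy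
    rw [map_add, map_add, hx, hy]

lemma Lam_Phi (t : ∀ α, Tensor A (N α) (FinFree A fun j => e (κ j))) :
    LamHom κ (PhiHom κ t) = t := by
  funext α
  show prTensor (e := e) _ α (∑ j, Tensor.mk A _ _
      ((⟨fun α => muHom (e := e) κ j (t α), mu_tuple_mem κ j t⟩ :
        ↥(RA Aᵐᵒᵖ (fun i => op (e i)) (∀ β, N β)))) (dlt (e := e) κ j)) = t α
  rw [map_sum]
  rw [Finset.sum_congr rfl (fun j (_ : j ∈ Finset.univ) => prTensor_mk α _ _)]
  exact sum_mk_mu κ (t α)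

lemma LamHom_injective : Function.Injective (LamHom (e := e) (N := N) κ) := by
  intro z z' hzz
  rw [← Phi_Lam κ z, ← Phi_Lam κ z', hzz]

end Prod

section LKerSec

variable {A : Type u} [NonUnitalRing A]
variable {M : Type w} [AddCommGroup M] [PreMod A M]
variable {F : Type w'} [AddCommGroup F] [PreMod A F]

/-- Kernel of an `A`-linear map, as a subgroup. -/
def LKer (g : ↥(LHom A M F)) : AddSubgroup M := AddMonoidHom.ker (g : M →+ F)

lemma LKer_smul_mem (g : ↥(LHom A M F)) (a : A) {x : M} (hx : x ∈ LKer g) :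
    a • x ∈ LKer g := by
  show (g : M →+ F) (a • x) = 0
  rw [(mem_LHom A ((g : M →+ F))).mp g.2 a x, show (g : M →+ F) x = 0 from hx,
    PreMod.psmul_zero]

instance LKer.instPreMod (g : ↥(LHom A M F)) : PreMod A ↥(LKer g) where
  smul a x := ⟨a • x.1, LKer_smul_mem g a x.2⟩
  smul_add' a x y := Subtype.ext (PreMod.smul_add' a x.1 y.1)
  add_smul' a b x := Subtype.ext (PreMod.add_smul' a b x.1)
  mul_smul' a b x := Subtype.ext (PreMod.mul_smul' a b x.1)

end LKerSec

section Comparison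

variable {A : Type u} [NonUnitalRing A] {I : Type v} {e : I → A} [EnoughIdems A e]
variable {F : Type w} [AddCommGroup F] [PreMod A F]
variable {k₀ : ℕ} {κ₀ : Fin k₀ → I}
variable (g : ↥(LHom A (FinFree A fun j => e (κ₀ j)) F))

/-- The image of the `j`-th basis element in the canonical free cover. -/
noncomputable def pelt (j : Fin k₀) : (I × F) →₀ A :=
  Finsupp.single (κ₀ j, (g : (FinFree A fun j => e (κ₀ j)) →+ F) (dlt (e := e) κ₀ j)) (e (κ₀ j))

/-- The comparison map from the finite free cover to the canonical free cover. -/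
noncomputable def uHom : (FinFree A fun j => e (κ₀ j)) →+ ((I × F) →₀ A) :=
  AddMonoidHom.mk' (fun q => ∑ j, (q j : A) • pelt (e := e) g j)
    (fun q q' => by
      rw [← Finset.sum_add_distrib]
      refine Finset.sum_congr rfl (fun j _ => ?_)
      show (((q + q') j : A)) • _ = _
      rw [show (((q + q') j : A)) = (q j : A) + (q' j : A) from rfl, PreMod.add_smul'])

lemma uHom_lin (a : A) (q : FinFree A fun j => e (κ₀ j)) :
    uHom (e := e) g (a • q) = a • uHom (e := e) g q := by
  have step : ∀ j : Fin k₀, (((a • q) j : A)) • pelt (e := e) g j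
      = a • ((q j : A) • pelt (e := e) g j) := fun j => PreMod.mul_smul' _ _ _
  show ∑ j, (((a • q) j : A)) • pelt (e := e) g j = _
  rw [Finset.sum_congr rfl (fun j (_ : j ∈ Finset.univ) => step j)]
  exact (map_sum (PreMod.smulHom ((I × F) →₀ A) a)
    (fun j => (q j : A) • pelt (e := e) g j) Finset.univ).symm

lemma cov_pelt (j : Fin k₀) :
    covHom A e F (pelt (e := e) g j) = (g : (FinFree A fun j => e (κ₀ j)) →+ F) (dlt (e := e) κ₀ j) := by
  rw [pelt, covHom_single]
  show (e (κ₀ j) * e (κ₀ j)) • ((g : (FinFree A fun j => e (κ₀ j)) →+ F) (dlt (e := e) κ₀ j)) = _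
  rw [EnoughIdems.idem (e := e) (κ₀ j),
    ← (mem_LHom A ((g : (FinFree A fun j => e (κ₀ j)) →+ F))).mp g.2 (e (κ₀ j)) _, e_smul_dlt]

lemma cov_u (q : FinFree A fun j => e (κ₀ j)) :
    covHom A e F (uHom (e := e) g q) = (g : (FinFree A fun j => e (κ₀ j)) →+ F) q := by
  show covHom A e F (∑ j, (q j : A) • pelt (e := e) g j) = _
  rw [map_sum]
  have step : ∀ j : Fin k₀, covHom A e F ((q j : A) • pelt (e := e) g j)
      = (g : (FinFree A fun j => e (κ₀ j)) →+ F) ((q j : A) • dlt (e := e) κ₀ j) := by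
    intro j
    rw [covHom_linear, cov_pelt, ← (mem_LHom A ((g : (FinFree A fun j => e (κ₀ j)) →+ F))).mp g.2]
  rw [Finset.sum_congr rfl (fun j (_ : j ∈ Finset.univ) => step j)]
  have h := map_sum (g : (FinFree A fun j => e (κ₀ j)) →+ F)
    (fun j => (q j : A) • dlt (e := e) κ₀ j) Finset.univ
  rw [sum_dlt_repr] at h
  exact h.symm

variable (hg : Function.Surjective ⇑(g : (FinFree A fun j => e (κ₀ j)) →+ F))

/-- The comparison map from the canonical free cover to the finite free cover. -/
noncomputable def vHom : ((I × F) →₀ A) →+ (FinFree A fun j => e (κ₀ j)) :=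
  Finsupp.liftAddHom (fun p => AddMonoidHom.mk'
    (fun a => (a * e p.1) • Function.surjInv hg p.2)
    (fun a b => by
      show ((a + b) * e p.1) • Function.surjInv hg p.2 = _
      rw [add_mul, PreMod.add_smul']))

lemma vHom_single (p : I × F) (a : A) :
    vHom (e := e) g hg (Finsupp.single p a)
      = (a * e p.1) • Function.surjInv hg p.2 := by
  rw [vHom, Finsupp.liftAddHom_apply_single]
  rfl

lemma vHom_lin (a : A) (x : (I × F) →₀ A) :
    vHom (e := e) g hg (a • x) = a • vHom (e := e) g hg x := by
  induction x using Finsupp.induction with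
  | zero => rw [PreMod.psmul_zero, map_zero, PreMod.psmul_zero]
  | single_add p b f _ _ ih =>
    rw [PreMod.smul_add', map_add, map_add, PreMod.smul_add', ih,
      PreMod.finsupp_smul_single, vHom_single, vHom_single, mul_assoc, PreMod.mul_smul']

lemma g_vHom (x : (I × F) →₀ A) :
    (g : (FinFree A fun j => e (κ₀ j)) →+ F) (vHom (e := e) g hg x) = covHom A e F x := by
  induction x using Finsupp.induction with
  | zero => simp
  | single_add p b f _ _ ih =>
    rw [map_add (vHom (e := e) g hg), map_add (g : (FinFree A fun j => e (κ₀ j)) →+ F),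
      map_add (covHom A e F), ih, vHom_single,
      (mem_LHom A ((g : (FinFree A fun j => e (κ₀ j)) →+ F))).mp g.2,
      Function.surjInv_eq hg p.2, covHom_single]

/-- Restriction of `uHom` to the syzygies. -/
noncomputable def uK : ↥(LKer g) →+ ↥(KK A e F) :=
  AddMonoidHom.mk' (fun x => ⟨uHom (e := e) g x.1, by
      show covHom A e F _ = 0
      rw [cov_u, show (g : (FinFree A fun j => e (κ₀ j)) →+ F) x.1 = 0 from x.2]⟩)
    (fun x y => Subtype.ext (map_add (uHom (e := e) g) x.1 y.1))

lemma uK_lin (a : A) (x : ↥(LKer g)) : uK (e := e) g (a • x) = a • uK (e := e) g x :=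
  Subtype.ext (uHom_lin g a x.1)

/-- Restriction of `vHom` to the syzygies. -/
noncomputable def vK : ↥(KK A e F) →+ ↥(LKer g) :=
  AddMonoidHom.mk' (fun y => ⟨vHom (e := e) g hg y.1, by
      show (g : (FinFree A fun j => e (κ₀ j)) →+ F) _ = 0
      rw [g_vHom, show covHom A e F y.1 = 0 from y.2]⟩)
    (fun x y => Subtype.ext (map_add (vHom (e := e) g hg) x.1 y.1))

lemma vK_lin (a : A) (y : ↥(KK A e F)) :
    vK (e := e) g hg (a • y) = a • vK (e := e) g hg y :=
  Subtype.ext (vHom_lin g hg a y.1)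

/-- The defect `v ∘ u - id`, valued in the syzygies. -/
noncomputable def sHom : (FinFree A fun j => e (κ₀ j)) →+ ↥(LKer g) :=
  AddMonoidHom.mk' (fun q => ⟨vHom (e := e) g hg (uHom (e := e) g q) - q, by
      show (g : (FinFree A fun j => e (κ₀ j)) →+ F) _ = 0
      rw [map_sub, g_vHom, cov_u, sub_self]⟩)
    (fun q q' => Subtype.ext (by
      show vHom (e := e) g hg (uHom (e := e) g (q + q')) - (q + q')
        = (vHom (e := e) g hg (uHom (e := e) g q) - q)
          + (vHom (e := e) g hg (uHom (e := e) g q') - q')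
      rw [map_add, map_add]
      abel))

lemma sHom_lin (a : A) (q : FinFree A fun j => e (κ₀ j)) :
    sHom (e := e) g hg (a • q) = a • sHom (e := e) g hg q :=
  Subtype.ext (by
    show vHom (e := e) g hg (uHom (e := e) g (a • q)) - a • q
      = a • (vHom (e := e) g hg (uHom (e := e) g q) - q)
    rw [uHom_lin, vHom_lin, psmul_sub])

lemma vuK (x : ↥(LKer g)) :
    vK (e := e) g hg (uK (e := e) g x) = x + sHom (e := e) g hg x.1 :=
  Subtype.ext (by
    show vHom (e := e) g hg (uHom (e := e) g x.1)
      = x.1 + (vHom (e := e) g hg (uHom (e := e) g x.1) - x.1)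
    abel)

/-- The defect `u ∘ v - id`, valued in the canonical syzygies. -/
noncomputable def rHom : ((I × F) →₀ A) →+ ↥(KK A e F) :=
  AddMonoidHom.mk' (fun p => ⟨uHom (e := e) g (vHom (e := e) g hg p) - p, by
      show covHom A e F _ = 0
      rw [map_sub, cov_u, g_vHom, sub_self]⟩)
    (fun p p' => Subtype.ext (by
      show uHom (e := e) g (vHom (e := e) g hg (p + p')) - (p + p')
        = (uHom (e := e) g (vHom (e := e) g hg p) - p)
          + (uHom (e := e) g (vHom (e := e) g hg p') - p')
      rw [map_add, map_add]
      abel))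

lemma rHom_lin (a : A) (p : (I × F) →₀ A) :
    rHom (e := e) g hg (a • p) = a • rHom (e := e) g hg p :=
  Subtype.ext (by
    show uHom (e := e) g (vHom (e := e) g hg (a • p)) - a • p
      = a • (uHom (e := e) g (vHom (e := e) g hg p) - p)
    rw [vHom_lin, uHom_lin, psmul_sub])

lemma uvK (y : ↥(KK A e F)) :
    uK (e := e) g (vK (e := e) g hg y) = y + rHom (e := e) g hg y.1 :=
  Subtype.ext (by
    show uHom (e := e) g (vHom (e := e) g hg y.1)
      = y.1 + (uHom (e := e) g (vHom (e := e) g hg y.1) - y.1)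
    abel)

variable (X : Type w₂) [AddCommGroup X] [PreMod Aᵐᵒᵖ X]

/-- Inclusion of the finite syzygies into the finite free cover, on tensors. -/
noncomputable def tfpHom : Tensor A X ↥(LKer g) →+ Tensor A X (FinFree A fun j => e (κ₀ j)) :=
  Tensor.map (AddMonoidHom.id X) (LKer g).subtype (fun _ _ => rfl) (fun _ _ => rfl)

lemma tfpHom_mk (n : X) (x : ↥(LKer g)) :
    tfpHom (e := e) g X (Tensor.mk A X _ n x) = Tensor.mk A X _ n x.1 :=
  Tensor.map_mk _ _ _ _ _ _

lemma torMap_mk (n : X) (y : ↥(KK A e F)) :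
    torMap A e F X (Tensor.mk A X _ n y) = Tensor.mk A X _ n y.1 :=
  Tensor.map_mk _ _ _ _ _ _

/-- `u` on tensors. -/
noncomputable def UHom : Tensor A X ↥(LKer g) →+ Tensor A X ↥(KK A e F) :=
  Tensor.map (AddMonoidHom.id X) (uK (e := e) g) (fun _ _ => rfl) (uK_lin g)

lemma UHom_mk (n : X) (x : ↥(LKer g)) :
    UHom (e := e) g X (Tensor.mk A X _ n x) = Tensor.mk A X _ n (uK (e := e) g x) :=
  Tensor.map_mk _ _ _ _ _ _

/-- `v` on tensors. -/
noncomputable def VHom : Tensor A X ↥(KK A e F) →+ Tensor A X ↥(LKer g) :=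
  Tensor.map (AddMonoidHom.id X) (vK (e := e) g hg) (fun _ _ => rfl) (vK_lin g hg)

lemma VHom_mk (n : X) (y : ↥(KK A e F)) :
    VHom (e := e) g hg X (Tensor.mk A X _ n y) = Tensor.mk A X _ n (vK (e := e) g hg y) :=
  Tensor.map_mk _ _ _ _ _ _

lemma VU_tor (z : Tensor A X ↥(LKer g)) (hz : tfpHom (e := e) g X z = 0) :
    VHom (e := e) g hg X (UHom (e := e) g X z) = z := by
  have hcomp : (VHom (e := e) g hg X).comp (UHom (e := e) g X)
      = (AddMonoidHom.id _) + (Tensor.map (AddMonoidHom.id X) (sHom (e := e) g hg)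
          (fun _ _ => rfl) (sHom_lin g hg)).comp (tfpHom (e := e) g X) := by
    refine Tensor.hom_ext (fun n x => ?_)
    rw [AddMonoidHom.comp_apply, AddMonoidHom.add_apply, AddMonoidHom.id_apply,
      AddMonoidHom.comp_apply, UHom_mk, VHom_mk, tfpHom_mk, Tensor.map_mk, vuK,
      Tensor.mk_add_right]
    rfl
  have h2 := congrArg (fun φ => φ z) hcomp
  simp only [AddMonoidHom.comp_apply, AddMonoidHom.add_apply, AddMonoidHom.id_apply] at h2
  rw [hz, map_zero, add_zero] at h2
  exact h2

lemma UV_tor (z : Tensor A X ↥(KK A e F)) (hz : torMap A e F X z = 0) :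
    UHom (e := e) g X (VHom (e := e) g hg X z) = z := by
  have hcomp : (UHom (e := e) g X).comp (VHom (e := e) g hg X)
      = (AddMonoidHom.id _) + (Tensor.map (AddMonoidHom.id X) (rHom (e := e) g hg)
          (fun _ _ => rfl) (rHom_lin g hg)).comp (torMap A e F X) := by
    refine Tensor.hom_ext (fun n y => ?_)
    rw [AddMonoidHom.comp_apply, AddMonoidHom.add_apply, AddMonoidHom.id_apply,
      AddMonoidHom.comp_apply, VHom_mk, UHom_mk, torMap_mk, Tensor.map_mk, uvK,
      Tensor.mk_add_right]
    rfl
  have h2 := congrArg (fun φ => φ z) hcomp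
  simp only [AddMonoidHom.comp_apply, AddMonoidHom.add_apply, AddMonoidHom.id_apply] at h2
  rw [hz, map_zero, add_zero] at h2
  exact h2

lemma tor_U (z : Tensor A X ↥(LKer g)) :
    torMap A e F X (UHom (e := e) g X z)
      = Tensor.map (AddMonoidHom.id X) (uHom (e := e) g) (fun _ _ => rfl) (uHom_lin g)
          (tfpHom (e := e) g X z) := by
  refine Tensor.ind (C := fun z => torMap A e F X (UHom (e := e) g X z)
      = Tensor.map (AddMonoidHom.id X) (uHom (e := e) g) (fun _ _ => rfl) (uHom_lin g)
          (tfpHom (e := e) g X z)) ?_ ?_ z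
  · intro n x
    rw [UHom_mk, torMap_mk, tfpHom_mk, Tensor.map_mk]
    rfl
  · intro x y hx hy
    simp only [map_add, hx, hy]

lemma tfp_V (z : Tensor A X ↥(KK A e F)) :
    tfpHom (e := e) g X (VHom (e := e) g hg X z)
      = Tensor.map (AddMonoidHom.id X) (vHom (e := e) g hg) (fun _ _ => rfl)
          (vHom_lin g hg) (torMap A e F X z) := by
  refine Tensor.ind (C := fun z => tfpHom (e := e) g X (VHom (e := e) g hg X z)
      = Tensor.map (AddMonoidHom.id X) (vHom (e := e) g hg) (fun _ _ => rfl)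
          (vHom_lin g hg) (torMap A e F X z)) ?_ ?_ z
  · intro n y
    rw [VHom_mk, tfpHom_mk, torMap_mk, Tensor.map_mk]
    rfl
  · intro x y hx hy
    simp only [map_add, hx, hy]

lemma tfp_map {W : Type w₃} [AddCommGroup W] [PreMod A W] (ψ : W →+ ↥(LKer g))
    (hψ : ∀ (a : A) (m : W), ψ (a • m) = a • ψ m) (z : Tensor A X W) :
    tfpHom (e := e) g X (Tensor.map (AddMonoidHom.id X) ψ (fun _ _ => rfl) hψ z)
      = Tensor.map (AddMonoidHom.id X) ((LKer g).subtype.comp ψ) (fun _ _ => rfl)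
          (fun a m => by rw [AddMonoidHom.comp_apply, hψ]; rfl) z := by
  refine Tensor.ind (C := fun z => tfpHom (e := e) g X
      (Tensor.map (AddMonoidHom.id X) ψ (fun _ _ => rfl) hψ z)
      = Tensor.map (AddMonoidHom.id X) ((LKer g).subtype.comp ψ) (fun _ _ => rfl)
          (fun a m => by rw [AddMonoidHom.comp_apply, hψ]; rfl) z)
    ?_ ?_ z
  · intro n m
    rw [Tensor.map_mk, tfpHom_mk, Tensor.map_mk]
    rfl
  · intro x y hx hy
    simp only [map_add, hx, hy]

end Comparison

end EIMod

/-- For a ring `A` with enough idempotents and a unital left `A`-module `F` of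
type `FP₂`, for any family `{N_α}` of unital right `A`-modules there is an isomorphism
`Tor₁^A(∏^u_α N_α, F) ≅ ∏_α Tor₁^A(N_α, F)`, where `∏^u` is the product of unital right
`A`-modules; it is induced by the projections. -/
theorem tor1_of_unital_product_iso_product_of_tor1
    (A : Type u) [NonUnitalRing A] {I : Type v} (e : I → A) [EnoughIdems A e]
    (F : Type u) [AddCommGroup F] [PreMod A F] (hF : IsFPn A e 2 F)
    (S : Type w) (N : S → Type u) [∀ α, AddCommGroup (N α)] [∀ α, PreMod Aᵐᵒᵖ (N α)]
    (hN : ∀ α, IsUnital Aᵐᵒᵖ (fun i => op (e i)) (N α)) :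
    ∃ φ : ↥(Tor1 A e F (↥(RA Aᵐᵒᵖ (fun i => op (e i)) (∀ β, N β))))
        ≃+ (∀ α : S, ↥(Tor1 A e F (N α))),
      ∀ (z : ↥(Tor1 A e F (↥(RA Aᵐᵒᵖ (fun i => op (e i)) (∀ β, N β))))) (α : S),
        ((φ z α : ↥(Tor1 A e F (N α)))
            : Tensor A (N α) ↥(KK A e F))
          = projTorMap A e S N F α
            (z : Tensor A (↥(RA Aᵐᵒᵖ (fun i => op (e i)) (∀ β, N β))) ↥(KK A e F)) := by
  classical
  obtain ⟨k, ι, d, g, hgs, h0, hstep⟩ := hF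
  have hrange0 := h0 (by norm_num)
  have hrange1 := hstep 0 (by norm_num)
  -- the corestriction of `d 0` to the syzygies of `g`
  let d0' : (FinFree A fun j => e (ι 1 j)) →+ ↥(LKer g) :=
    AddMonoidHom.mk' (fun q => ⟨(d 0 : (FinFree A fun j => e (ι 1 j)) →+
          (FinFree A fun j => e (ι 0 j))) q, by
        show _ ∈ AddMonoidHom.ker (g : (FinFree A fun j => e (ι 0 j)) →+ F)
        rw [← hrange0]
        exact ⟨q, rfl⟩⟩)
      (fun q q' => Subtype.ext (map_add _ _ _))
  have d0'_lin : ∀ (a : A) (q : FinFree A fun j => e (ι 1 j)), d0' (a • q) = a • d0' q :=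
    fun a q => Subtype.ext ((mem_LHom A ((d 0 : (FinFree A fun j => e (ι 1 j)) →+
      (FinFree A fun j => e (ι 0 j))))).mp (d 0).2 a q)
  have d0'_surj : Function.Surjective d0' := by
    intro x
    have hx : x.1 ∈ AddMonoidHom.ker (g : (FinFree A fun j => e (ι 0 j)) →+ F) := x.2
    rw [← hrange0] at hx
    obtain ⟨q, hq⟩ := hx
    exact ⟨q, Subtype.ext hq⟩
  have d1_lin : ∀ (a : A) (q : FinFree A fun j => e (ι 2 j)),
      (d 1 : (FinFree A fun j => e (ι 2 j)) →+ (FinFree A fun j => e (ι 1 j))) (a • q)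
        = a • (d 1 : (FinFree A fun j => e (ι 2 j)) →+ (FinFree A fun j => e (ι 1 j))) q :=
    fun a q => (mem_LHom A ((d 1 : (FinFree A fun j => e (ι 2 j)) →+
      (FinFree A fun j => e (ι 1 j))))).mp (d 1).2 a q
  have hex : ((d 1 : (FinFree A fun j => e (ι 2 j)) →+ (FinFree A fun j => e (ι 1 j)))).range
      = AddMonoidHom.ker d0' := by
    rw [hrange1]
    ext q
    constructor
    · intro hq
      exact AddMonoidHom.mem_ker.mpr (Subtype.ext (AddMonoidHom.mem_ker.mp hq))
    · intro hq
      exact AddMonoidHom.mem_ker.mpr (congrArg Subtype.val (AddMonoidHom.mem_ker.mp hq))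
  -- the candidate map
  let Φ : ↥(Tor1 A e F (↥(RA Aᵐᵒᵖ (fun i => op (e i)) (∀ β, N β))))
      →+ ∀ α : S, ↥(Tor1 A e F (N α)) :=
    AddMonoidHom.mk' (fun z => fun α => ⟨projTorMap A e S N F α z.1, by
        show torMap A e F (N α) (projTorMap A e S N F α z.1) = 0
        have hnat := prTensor_natural (e := e) (N := N) α ((KK A e F).subtype)
          (fun _ _ => rfl) z.1
        have hz0 : Tensor.map (AddMonoidHom.id _) ((KK A e F).subtype) (fun _ _ => rfl)
            (fun _ _ => rfl) z.1 = (0 : Tensor A _ ((I × F) →₀ A)) := z.2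
        rw [hz0, map_zero] at hnat
        exact hnat.symm⟩)
      (fun z z' => funext fun α => Subtype.ext (by
        show projTorMap A e S N F α (z + z').1 = _
        rw [show (z + z').1 = z.1 + z'.1 from rfl, map_add]
        rfl))
  have hinj : Function.Injective Φ := by
    refine (injective_iff_map_eq_zero Φ).mpr ?_
    intro z hz
    have hpr : ∀ α, prTensor (e := e) (N := N) (↥(KK A e F)) α z.1 = 0 :=
      fun α => congrArg Subtype.val (congrFun hz α)
    have hz1 : torMap A e F _ z.1 = 0 := z.2
    have htfp : tfpHom (e := e) g _ (VHom (e := e) g hgs _ z.1) = 0 := by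
      rw [tfp_V, hz1, map_zero]
    have hprz0 : ∀ α, prTensor (e := e) (N := N) (↥(LKer g)) α
        (VHom (e := e) g hgs _ z.1) = 0 := by
      intro α
      have hnat := prTensor_natural (e := e) (N := N) α (vK (e := e) g hgs)
        (vK_lin g hgs) z.1
      rw [hpr α, map_zero] at hnat
      exact hnat
    obtain ⟨w, hw⟩ := Tensor.map_id_surjective
      (N := ↥(RA Aᵐᵒᵖ (fun i => op (e i)) (∀ β, N β))) d0' d0'_lin d0'_surj
      (VHom (e := e) g hgs _ z.1)
    have hPrw : ∀ α, Tensor.map (AddMonoidHom.id (N α)) d0' (fun _ _ => rfl) d0'_lin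
        (prTensor (e := e) (N := N) _ α w) = 0 := by
      intro α
      have hnat := prTensor_natural (e := e) (N := N) α d0' d0'_lin w
      rw [hw, hprz0 α] at hnat
      exact hnat.symm
    have hchoice : ∀ α, ∃ yα, Tensor.map (AddMonoidHom.id (N α))
        (d 1 : (FinFree A fun j => e (ι 2 j)) →+ (FinFree A fun j => e (ι 1 j)))
        (fun _ _ => rfl) d1_lin yα = prTensor (e := e) (N := N) _ α w :=
      fun α => Tensor.exact_of_exact _ d0' d1_lin d0'_lin d0'_surj hex _ (hPrw α)
    choose ys hys using hchoice
    have hwy : Tensor.map (AddMonoidHom.id (↥(RA Aᵐᵒᵖ (fun i => op (e i)) (∀ β, N β))))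
        (d 1 : (FinFree A fun j => e (ι 2 j)) →+ (FinFree A fun j => e (ι 1 j)))
        (fun _ _ => rfl) d1_lin (PhiHom (e := e) (N := N) (ι 2) ys) = w := by
      apply LamHom_injective (e := e) (N := N) (ι 1)
      funext α
      show prTensor (e := e) (N := N) _ α (Tensor.map (AddMonoidHom.id _)
          (d 1 : (FinFree A fun j => e (ι 2 j)) →+ (FinFree A fun j => e (ι 1 j)))
          (fun _ _ => rfl) d1_lin (PhiHom (e := e) (N := N) (ι 2) ys))
        = prTensor (e := e) (N := N) _ α w
      rw [prTensor_natural, show prTensor (e := e) (N := N) _ α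
          (PhiHom (e := e) (N := N) (ι 2) ys) = ys α from
        congrFun (Lam_Phi (e := e) (N := N) (ι 2) ys) α, hys α]
    have hzero : Tensor.map (AddMonoidHom.id (↥(RA Aᵐᵒᵖ (fun i => op (e i)) (∀ β, N β))))
        d0' (fun _ _ => rfl) d0'_lin (Tensor.map (AddMonoidHom.id _)
        (d 1 : (FinFree A fun j => e (ι 2 j)) →+ (FinFree A fun j => e (ι 1 j)))
        (fun _ _ => rfl) d1_lin (PhiHom (e := e) (N := N) (ι 2) ys)) = 0 := by
      refine Tensor.ind (C := fun y => Tensor.map (AddMonoidHom.id _) d0' (fun _ _ => rfl)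
          d0'_lin (Tensor.map (AddMonoidHom.id _)
          (d 1 : (FinFree A fun j => e (ι 2 j)) →+ (FinFree A fun j => e (ι 1 j)))
          (fun _ _ => rfl) d1_lin y) = 0) ?_ ?_ _
      · intro n q
        rw [Tensor.map_mk, Tensor.map_mk]
        have hzq : d0' ((d 1 : (FinFree A fun j => e (ι 2 j)) →+
            (FinFree A fun j => e (ι 1 j))) q) = 0 := by
          have hm : (d 1 : (FinFree A fun j => e (ι 2 j)) →+
              (FinFree A fun j => e (ι 1 j))) q ∈ AddMonoidHom.ker d0' := by
            rw [← hex]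
            exact ⟨q, rfl⟩
          exact hm
        rw [hzq, Tensor.mk_zero_right]
      · intro x y hx hy
        simp only [map_add, hx, hy, add_zero]
    have hz0 : VHom (e := e) g hgs _ z.1 = 0 := by
      rw [← hw, ← hwy]
      exact hzero
    have hfin : z.1 = 0 := by
      have hUV := UV_tor (e := e) g hgs _ z.1 hz1
      rw [hz0, map_zero] at hUV
      exact hUV.symm
    exact Subtype.ext hfin
  have hsurj : Function.Surjective Φ := by
    intro t
    have htfpα : ∀ α, tfpHom (e := e) g _ (VHom (e := e) g hgs _ (t α).1) = 0 := by
      intro α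
      rw [tfp_V, show torMap A e F (N α) (t α).1 = 0 from (t α).2, map_zero]
    have hsurj' : ∀ α, ∃ wα, Tensor.map (AddMonoidHom.id (N α)) d0' (fun _ _ => rfl)
        d0'_lin wα = VHom (e := e) g hgs _ (t α).1 :=
      fun α => Tensor.map_id_surjective d0' d0'_lin d0'_surj _
    choose ws hws using hsurj'
    have hprw : ∀ α, prTensor (e := e) (N := N) _ α (PhiHom (e := e) (N := N) (ι 1) ws)
        = ws α := fun α => congrFun (Lam_Phi (e := e) (N := N) (ι 1) ws) α
    -- the lift of the syzygy classes
    set w := PhiHom (e := e) (N := N) (ι 1) ws with hwdef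
    set z0 := Tensor.map (AddMonoidHom.id (↥(RA Aᵐᵒᵖ (fun i => op (e i)) (∀ β, N β))))
      d0' (fun _ _ => rfl) d0'_lin w with hz0def
    have htfpz0 : tfpHom (e := e) g _ z0 = 0 := by
      rw [hz0def, tfp_map]
      apply LamHom_injective (e := e) (N := N) (ι 0)
      funext α
      show prTensor (e := e) (N := N) _ α (Tensor.map (AddMonoidHom.id _)
          ((LKer g).subtype.comp d0') (fun _ _ => rfl) _ w)
        = LamHom (e := e) (N := N) (ι 0) 0 α
      rw [map_zero]
      show prTensor (e := e) (N := N) _ α (Tensor.map (AddMonoidHom.id _)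
          ((LKer g).subtype.comp d0') (fun _ _ => rfl) _ w) = 0
      rw [prTensor_natural, ← tfp_map (e := e) g _ d0' d0'_lin, hprw α, hws α, htfpα α]
    have htor : torMap A e F _ (UHom (e := e) g _ z0) = 0 := by
      rw [tor_U, htfpz0, map_zero]
    refine ⟨⟨UHom (e := e) g _ z0, htor⟩, ?_⟩
    funext α
    refine Subtype.ext ?_
    show projTorMap A e S N F α (UHom (e := e) g _ z0) = (t α).1
    have hnatU := prTensor_natural (e := e) (N := N) α (uK (e := e) g) (uK_lin g) z0
    have hnatd := prTensor_natural (e := e) (N := N) α d0' d0'_lin w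
    calc prTensor (e := e) (N := N) _ α (UHom (e := e) g _ z0)
        = UHom (e := e) g (N α) (prTensor (e := e) (N := N) _ α z0) := hnatU
      _ = UHom (e := e) g (N α) (Tensor.map (AddMonoidHom.id (N α)) d0' (fun _ _ => rfl)
            d0'_lin (prTensor (e := e) (N := N) _ α w)) := by rw [hz0def, hnatd]
      _ = UHom (e := e) g (N α) (VHom (e := e) g hgs _ (t α).1) := by rw [hprw α, hws α]
      _ = (t α).1 := UV_tor (e := e) g hgs _ (t α).1 (t α).2
  exact ⟨AddEquiv.ofBijective Φ ⟨hinj, hsurj⟩, fun z α => rfl⟩
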